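/- Let ⋆ be a continuous and sup-continuous triangle function and (G,·,D,⋆) a probabilistic invariant metric group. Then the group of invertible elements of the monoid (Lip¹_⋆(G,Δ⁺), ⊙) equals {x ↦ f(x) ⋆ U : f ∈ Π(G), U invertible in (Δ⁺,⋆)}, and the inverse of ⟨f,U⟩ is ⟨f⁻¹, U⁻¹⟩. In particular, if H_0 is the only invertible element of (Δ⁺,⋆), then the group of units of (Lip¹_⋆(G,Δ⁺), ⊙) is exactly Π(G), and if moreover G is complete it is {δ_a : a ∈ G} ≅ G. -/

import Mathlib

open Filter Topology Set

/-- A (real-domain representation of a) distribution function in Δ⁺ :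
nondecreasing, with values in [0,1], left-continuous, vanishing on (-∞,0]. -/
def MemDP (f : ℝ → ℝ) : Prop :=
  Monotone f ∧ (∀ t, 0 ≤ f t) ∧ (∀ t, f t ≤ 1) ∧
  (∀ t : ℝ, Tendsto f (nhdsWithin t (Set.Iio t)) (nhds (f t))) ∧
  (∀ t ≤ (0:ℝ), f t = 0)

/-- The distribution H₀. -/
noncomputable def H0 : ℝ → ℝ := fun t => if 0 < t then 1 else 0

/-- The distribution H_∞ (zero at every finite point). -/
def Hinf : ℝ → ℝ := fun _ => 0

/-- Pointwise order on distribution functions. -/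
def dpLE (f g : ℝ → ℝ) : Prop := ∀ t, f t ≤ g t

/-- Triangle function on Δ⁺. -/
structure IsTriangle (star : (ℝ → ℝ) → (ℝ → ℝ) → (ℝ → ℝ)) : Prop where
  mem : ∀ f g, MemDP f → MemDP g → MemDP (star f g)
  comm : ∀ f g, MemDP f → MemDP g → star f g = star g f
  assoc : ∀ f g h, MemDP f → MemDP g → MemDP h →
    star f (star g h) = star (star f g) h
  ident : ∀ f, MemDP f → star f H0 = f
  mono : ∀ f g h, MemDP f → MemDP g → MemDP h → dpLE f g → dpLE (star f h) (star g h)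

/-- Sup-continuity of a triangle function (suprema in Δ⁺ are pointwise). -/
def SupCont (star : (ℝ → ℝ) → (ℝ → ℝ) → (ℝ → ℝ)) : Prop :=
  ∀ (I : Type) (_ : Nonempty I) (F : I → ℝ → ℝ) (L : ℝ → ℝ),
    (∀ i, MemDP (F i)) → MemDP L →
    ∀ t, (⨆ i, star (F i) L t) = star (fun s => ⨆ i, F i s) L t

/-- Weak convergence in Δ⁺: pointwise convergence at each continuity point of the limit. -/
def WConv (Fn : ℕ → ℝ → ℝ) (F : ℝ → ℝ) : Prop :=
  ∀ t, ContinuousAt F t → Tendsto (fun n => Fn n t) atTop (nhds (F t))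

/-- Continuity of a triangle function w.r.t. weak convergence. -/
def StarCont (star : (ℝ → ℝ) → (ℝ → ℝ) → (ℝ → ℝ)) : Prop :=
  ∀ (Fn Ln : ℕ → ℝ → ℝ) (F L : ℝ → ℝ),
    (∀ n, MemDP (Fn n)) → (∀ n, MemDP (Ln n)) → MemDP F → MemDP L →
    WConv Fn F → WConv Ln L → WConv (fun n => star (Fn n) (Ln n)) (star F L)

/-- Probabilistic metric space (G, D, ⋆). -/
structure IsPMS {G : Type} (D : G → G → ℝ → ℝ)
    (star : (ℝ → ℝ) → (ℝ → ℝ) → (ℝ → ℝ)) : Prop where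
  tri : IsTriangle star
  mem : ∀ p q, MemDP (D p q)
  eq_iff : ∀ p q, D p q = H0 ↔ p = q
  symm : ∀ p q, D p q = D q p
  triangle_ineq : ∀ p q r, dpLE (star (D p q) (D q r)) (D p r)

/-- Probabilistic invariant metric group. -/
structure IsPIMG {G : Type} [Group G] (D : G → G → ℝ → ℝ)
    (star : (ℝ → ℝ) → (ℝ → ℝ) → (ℝ → ℝ)) extends IsPMS D star : Prop where
  invL : ∀ p q r : G, D (r * p) (r * q) = D p q
  invR : ∀ p q r : G, D (p * r) (q * r) = D p q

/-- Probabilistic 1-Lipschitz map. -/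
def Lip1 {G : Type} (D : G → G → ℝ → ℝ) (star : (ℝ → ℝ) → (ℝ → ℝ) → (ℝ → ℝ))
    (f : G → ℝ → ℝ) : Prop :=
  (∀ x, MemDP (f x)) ∧ ∀ x y, dpLE (star (D x y) (f y)) (f x)

/-- δ_a(y) = D(y,a). -/
def dlt {G : Type} (D : G → G → ℝ → ℝ) (a : G) : G → ℝ → ℝ := fun y => D y a

/-- Sup-convolution (f ⊙ g)(x) = sup_{yz = x} f(y) ⋆ g(z), pointwise. -/
noncomputable def sconv {G : Type} [Group G] (star : (ℝ → ℝ) → (ℝ → ℝ) → (ℝ → ℝ))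
    (f g : G → ℝ → ℝ) : G → ℝ → ℝ :=
  fun x t => ⨆ y : G, star (f (x * y⁻¹)) (g y) t

/-- Cauchy sequence for a probabilistic metric: D(a_n, a_p) → H₀ weakly. -/
def PCauchy {G : Type} (D : G → G → ℝ → ℝ) (a : ℕ → G) : Prop :=
  ∀ t > (0:ℝ), ∀ ε > (0:ℝ), ∃ N, ∀ n ≥ N, ∀ p ≥ N, 1 - ε ≤ D (a n) (a p) t

/-- Π(G): probabilistic 1-Lipschitz maps that are pointwise weak limits of δ_{a_n}
for some Cauchy sequence (a_n). -/
def InPi {G : Type} (D : G → G → ℝ → ℝ) (star : (ℝ → ℝ) → (ℝ → ℝ) → (ℝ → ℝ))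
    (f : G → ℝ → ℝ) : Prop :=
  Lip1 D star f ∧ ∃ a : ℕ → G, PCauchy D a ∧ ∀ x, WConv (fun n => D (a n) x) (f x)

/-- 𝔻(f,g) = sup_{x∈G} f(x) ⋆ g(x), pointwise. -/
noncomputable def DD {G : Type} (star : (ℝ → ℝ) → (ℝ → ℝ) → (ℝ → ℝ))
    (f g : G → ℝ → ℝ) : ℝ → ℝ :=
  fun t => ⨆ x : G, star (f x) (g x) t

/-- t-norm on [0,1]. -/
structure IsTnorm (T : ℝ → ℝ → ℝ) : Prop where
  mem : ∀ x ∈ Set.Icc (0:ℝ) 1, ∀ y ∈ Set.Icc (0:ℝ) 1, T x y ∈ Set.Icc (0:ℝ) 1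
  comm : ∀ x y, T x y = T y x
  assoc : ∀ x y z, T x (T y z) = T (T x y) z
  mono : ∀ x y z, y ≤ z → T x y ≤ T x z
  one : ∀ x ∈ Set.Icc (0:ℝ) 1, T x 1 = x

/-- Left-continuity of a t-norm (in each variable; by commutativity one suffices). -/
def LeftCtsTnorm (T : ℝ → ℝ → ℝ) : Prop :=
  ∀ y x : ℝ, Tendsto (fun s => T s y) (nhdsWithin x (Set.Iio x)) (nhds (T x y))

/-- The triangle function ⋆_T : (F ⋆_T L)(t) = sup_{s+u=t} T(F(s), L(u)). -/
noncomputable def starT (T : ℝ → ℝ → ℝ) (f g : ℝ → ℝ) : ℝ → ℝ :=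
  fun t => ⨆ s : ℝ, T (f s) (g (t - s))

/-- Invertible elements of the monoid (Δ⁺, ⋆). -/
def UnitDP (star : (ℝ → ℝ) → (ℝ → ℝ) → (ℝ → ℝ)) (U : ℝ → ℝ) : Prop :=
  MemDP U ∧ ∃ V, MemDP V ∧ star U V = H0 ∧ star V U = H0

section Basics

lemma H0_pos {t : ℝ} (ht : 0 < t) : H0 t = 1 := if_pos ht
lemma H0_nonpos {t : ℝ} (ht : t ≤ 0) : H0 t = 0 := if_neg (not_lt.2 ht)

lemma memDP_H0 : MemDP H0 := by
  refine ⟨?_, ?_, ?_, ?_, fun t ht => H0_nonpos ht⟩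
  · intro a b hab
    by_cases ha : 0 < a
    · rw [H0_pos ha, H0_pos (ha.trans_le hab)]
    · rw [H0_nonpos (not_lt.1 ha)]
      by_cases hb : 0 < b
      · rw [H0_pos hb]; norm_num
      · rw [H0_nonpos (not_lt.1 hb)]
  · intro t; unfold H0; split <;> norm_num
  · intro t; unfold H0; split <;> norm_num
  · intro t
    rcases lt_trichotomy t 0 with ht | ht | ht
    · apply Tendsto.congr' _ tendsto_const_nhds
      · filter_upwards [self_mem_nhdsWithin] with s hs
        rw [H0_nonpos (le_of_lt (hs.trans ht)), H0_nonpos ht.le]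
    · subst ht
      rw [H0_nonpos le_rfl]
      apply Tendsto.congr' _ tendsto_const_nhds
      filter_upwards [self_mem_nhdsWithin] with s hs
      rw [H0_nonpos (le_of_lt hs)]
    · rw [H0_pos ht]
      apply Tendsto.congr' _ tendsto_const_nhds
      filter_upwards [Ioo_mem_nhdsLT_of_mem ⟨half_lt_self ht, le_rfl⟩] with s hs
      rw [H0_pos (lt_trans (half_pos ht) hs.1)]


lemma MemDP.le_H0 {F : ℝ → ℝ} (hF : MemDP F) : dpLE F H0 := by
  intro t
  by_cases ht : 0 < t
  · rw [H0_pos ht]; exact hF.2.2.1 t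
  · rw [H0_nonpos (not_lt.1 ht), hF.2.2.2.2 t (not_lt.1 ht)]

/-- pick a point in an interval avoiding a countable set -/
lemma pick_avoid {S : Set ℝ} (hS : S.Countable) {a b : ℝ} (hab : a < b) :
    ∃ t, a < t ∧ t < b ∧ t ∉ S := by
  by_contra hcon
  push_neg at hcon
  have hsub : Ioo a b ⊆ S := fun t ht => hcon t ht.1 ht.2
  have h1 : MeasureTheory.volume (Ioo a b) = 0 :=
    le_antisymm (le_trans (MeasureTheory.measure_mono hsub) (le_of_eq (hS.measure_zero _)))
      zero_le
  rw [Real.volume_Ioo] at h1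
  simp only [ENNReal.ofReal_eq_zero, sub_nonpos] at h1
  exact absurd h1 (not_le.2 hab)

/-- comparison off a countable set -/
lemma dp_cmp {F G : ℝ → ℝ} (hF : MemDP F) (hG : Monotone G) {S : Set ℝ}
    (hS : S.Countable) (h : ∀ t ∉ S, F t ≤ G t) : dpLE F G := by
  intro t
  refine le_of_forall_pos_le_add (fun ε hε => ?_)
  have hlc := hF.2.2.2.1 t
  have hev : ∀ᶠ s in nhdsWithin t (Set.Iio t), F t - ε < F s := by
    have := hlc (Ioi_mem_nhds (show F t - ε < F t by linarith))
    filter_upwards [this] with s hs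
    exact hs
  rcases mem_nhdsLT_iff_exists_Ioo_subset.1 hev with ⟨l, hl, hsub⟩
  rcases pick_avoid hS (show l < t from hl) with ⟨s, hs1, hs2, hs3⟩
  have h1 : F t - ε < F s := hsub ⟨hs1, hs2⟩
  have h2 : F s ≤ G s := h s hs3
  have h3 : G s ≤ G t := hG hs2.le
  linarith

lemma dp_eq {F G : ℝ → ℝ} (hF : MemDP F) (hG : MemDP G) {S : Set ℝ}
    (hS : S.Countable) (h : ∀ t ∉ S, F t = G t) : F = G := by
  funext t
  exact le_antisymm (dp_cmp hF hG.1 hS (fun t ht => (h t ht).le) t)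
    (dp_cmp hG hF.1 hS (fun t ht => (h t ht).ge) t)

lemma wconv_const (F : ℝ → ℝ) : WConv (fun _ => F) F := fun t _ => tendsto_const_nhds

/-- two-sequence comparison of weak limits -/
lemma wconv_le {Pn Qn : ℕ → ℝ → ℝ} {P Q : ℝ → ℝ} (hP : MemDP P) (hQ : MemDP Q)
    (hPn : WConv Pn P) (hQn : WConv Qn Q) (hle : ∀ n, dpLE (Pn n) (Qn n)) : dpLE P Q := by
  have hS : ({t | ¬ContinuousAt P t} ∪ {t | ¬ContinuousAt Q t}).Countable :=
    (hP.1.countable_not_continuousAt).union (hQ.1.countable_not_continuousAt)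
  refine dp_cmp hP hQ.1 hS (fun t ht => ?_)
  simp only [Set.mem_union, Set.mem_setOf_eq, not_or, not_not] at ht
  exact le_of_tendsto_of_tendsto' (hPn t ht.1) (hQn t ht.2) (fun n => hle n t)

lemma wconv_unique {Pn : ℕ → ℝ → ℝ} {P Q : ℝ → ℝ} (hP : MemDP P) (hQ : MemDP Q)
    (hPn : WConv Pn P) (hQn : WConv Pn Q) : P = Q := by
  funext t
  exact le_antisymm (wconv_le hP hQ hPn hQn (fun n t => le_refl _) t)
    (wconv_le hQ hP hQn hPn (fun n t => le_refl _) t)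

lemma H0_not_contAt_zero : ¬ ContinuousAt H0 0 := by
  intro hc
  have h1 : Tendsto (fun n : ℕ => H0 (1 / (n + 1))) atTop (nhds (H0 0)) :=
    (hc.tendsto).comp tendsto_one_div_add_atTop_nhds_zero_nat
  have h2 : (fun n : ℕ => H0 (1 / (n + 1))) = fun _ => (1:ℝ) := by
    funext n
    exact H0_pos (by positivity)
  rw [h2, H0_nonpos le_rfl] at h1
  exact one_ne_zero (tendsto_nhds_unique tendsto_const_nhds h1)

/-- criterion for weak convergence to H0 -/
lemma wconv_H0 {Fn : ℕ → ℝ → ℝ} (hFn : ∀ n, MemDP (Fn n))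
    (h : ∀ t > (0:ℝ), ∀ ε > (0:ℝ), ∃ N, ∀ n ≥ N, 1 - ε ≤ Fn n t) : WConv Fn H0 := by
  intro t hct
  rcases lt_trichotomy t 0 with ht | ht | ht
  · rw [H0_nonpos ht.le]
    have : (fun n => Fn n t) = fun _ => (0:ℝ) := by
      funext n; exact (hFn n).2.2.2.2 t ht.le
    rw [this]; exact tendsto_const_nhds
  · exact absurd (ht ▸ hct) H0_not_contAt_zero
  · rw [H0_pos ht]
    rw [Metric.tendsto_atTop]
    intro ε hε
    rcases h t ht (ε/2) (half_pos hε) with ⟨N, hN⟩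
    refine ⟨N, fun n hn => ?_⟩
    have h1 := hN n hn
    have h2 := (hFn n).2.2.1 t
    rw [Real.dist_eq, abs_lt]
    constructor <;> linarith


noncomputable def reg (φ : ℚ → ℝ) : ℝ → ℝ := fun t => sSup (φ '' {q : ℚ | (q:ℝ) < t})

lemma reg_nonempty (φ : ℚ → ℝ) (t : ℝ) : (φ '' {q : ℚ | (q:ℝ) < t}).Nonempty := by
  rcases exists_rat_lt t with ⟨q, hq⟩
  exact ⟨φ q, ⟨q, hq, rfl⟩⟩

lemma reg_bddAbove {φ : ℚ → ℝ} (h1 : ∀ q, φ q ≤ 1) (t : ℝ) :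
    BddAbove (φ '' {q : ℚ | (q:ℝ) < t}) := by
  refine ⟨1, fun x hx => ?_⟩
  rcases hx with ⟨q, _, rfl⟩
  exact h1 q

lemma le_reg {φ : ℚ → ℝ} (h1 : ∀ q, φ q ≤ 1) {q : ℚ} {t : ℝ} (hq : (q:ℝ) < t) :
    φ q ≤ reg φ t :=
  le_csSup (reg_bddAbove h1 t) ⟨q, hq, rfl⟩

lemma reg_le {φ : ℚ → ℝ} {t a : ℝ} (h : ∀ q : ℚ, (q:ℝ) < t → φ q ≤ a) (ha : 0 ≤ a) :
    reg φ t ≤ a := by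
  refine Real.sSup_le (fun x hx => ?_) ha
  rcases hx with ⟨q, hq, rfl⟩
  exact h q hq

lemma reg_memDP {φ : ℚ → ℝ} (hmono : ∀ q q' : ℚ, q ≤ q' → φ q ≤ φ q')
    (h0 : ∀ q, 0 ≤ φ q) (h1 : ∀ q, φ q ≤ 1) (hneg : ∀ q : ℚ, (q:ℝ) ≤ 0 → φ q = 0) :
    MemDP (reg φ) := by
  have hnn : ∀ t, 0 ≤ reg φ t := fun t => Real.sSup_nonneg
    (fun x hx => by rcases hx with ⟨q, _, rfl⟩; exact h0 q)
  have hle1 : ∀ t, reg φ t ≤ 1 := fun t => reg_le (fun q _ => h1 q) zero_le_one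
  have hmon : Monotone (reg φ) := by
    intro s t hst
    exact reg_le (fun q hq => le_reg h1 (lt_of_lt_of_le hq hst)) (hnn t)
  refine ⟨hmon, hnn, hle1, ?_, ?_⟩
  · intro t
    rw [Metric.tendsto_nhds]
    intro ε hε
    have h2 : reg φ t - ε < reg φ t := by linarith
    rcases exists_lt_of_lt_csSup (reg_nonempty φ t) h2 with ⟨x, hx, hxgt⟩
    rcases hx with ⟨q0, hq0, rfl⟩
    filter_upwards [Ioo_mem_nhdsLT_of_mem (show t ∈ Set.Ioc ((q0:ℝ)) t from ⟨hq0, le_rfl⟩)]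
      with s hs
    have hBs : φ q0 ≤ reg φ s := le_reg h1 hs.1
    have hBst : reg φ s ≤ reg φ t := hmon hs.2.le
    rw [Real.dist_eq, abs_lt]
    constructor <;> linarith
  · intro t ht
    refine le_antisymm (reg_le (fun q hq => le_of_eq (hneg q (le_of_lt (lt_of_lt_of_le hq ht))))
      le_rfl) (hnn t)

/-- Helly selection: every sequence in Δ⁺ has a weakly convergent subsequence. -/
lemma helly {A : ℕ → ℝ → ℝ} (hA : ∀ n, MemDP (A n)) :
    ∃ ψ : ℕ → ℕ, StrictMono ψ ∧ ∃ B, MemDP B ∧ WConv (fun k => A (ψ k)) B := by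
  -- package into compact space
  set X := ℚ → Set.Icc (0:ℝ) 1 with hX
  have hF : ∀ n q, A n (q:ℝ) ∈ Set.Icc (0:ℝ) 1 := fun n q => ⟨(hA n).2.1 q, (hA n).2.2.1 q⟩
  set F : ℕ → X := fun n q => ⟨A n (q:ℝ), hF n q⟩ with hFdef
  obtain ⟨x, ψ, hψ, hconv⟩ := CompactSpace.tendsto_subseq F
  have hpt : ∀ q : ℚ, Tendsto (fun k => A (ψ k) (q:ℝ)) atTop (nhds ((x q : ℝ))) := by
    intro q
    have h1 : Tendsto (fun k => F (ψ k) q) atTop (nhds (x q)) := by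
      have := tendsto_pi_nhds.1 hconv q
      exact this
    exact (continuous_subtype_val.tendsto (x q)).comp h1
  set φ : ℚ → ℝ := fun q => (x q : ℝ) with hφ
  have hmono : ∀ q q' : ℚ, q ≤ q' → φ q ≤ φ q' := by
    intro q q' hqq
    exact le_of_tendsto_of_tendsto' (hpt q) (hpt q')
      (fun k => (hA (ψ k)).1 (by exact_mod_cast hqq))
  have h0 : ∀ q, 0 ≤ φ q := fun q => (x q).2.1
  have h1 : ∀ q, φ q ≤ 1 := fun q => (x q).2.2
  have hneg : ∀ q : ℚ, (q:ℝ) ≤ 0 → φ q = 0 := by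
    intro q hq
    have h2 : (fun k => A (ψ k) (q:ℝ)) = fun _ => (0:ℝ) := by
      funext k; exact (hA (ψ k)).2.2.2.2 _ hq
    have := hpt q
    rw [h2] at this
    exact tendsto_nhds_unique this tendsto_const_nhds
  refine ⟨ψ, hψ, reg φ, reg_memDP hmono h0 h1 hneg, ?_⟩
  intro t hct
  set B := reg φ with hB
  rw [Metric.tendsto_atTop]
  intro ε hε
  -- lower bound
  have h2 : B t - ε/2 < B t := by linarith
  rcases exists_lt_of_lt_csSup (reg_nonempty φ t) h2 with ⟨v, hv, hvgt⟩
  rcases hv with ⟨q0, hq0, rfl⟩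
  have hlow : ∀ᶠ k in atTop, B t - ε < A (ψ k) t := by
    have h3 := (hpt q0) (Ioi_mem_nhds (show φ q0 - ε/2 < φ q0 by linarith))
    filter_upwards [h3] with k hk
    have h4 : A (ψ k) (q0:ℝ) ≤ A (ψ k) t := (hA (ψ k)).1 hq0.le
    simp only [Set.mem_preimage, Set.mem_Ioi] at hk
    linarith
  -- upper bound
  have hup : ∀ᶠ k in atTop, A (ψ k) t < B t + ε := by
    have h5 : ∀ᶠ s in nhds t, B s < B t + ε/2 := by
      have := hct (Iio_mem_nhds (show B t < B t + ε/2 by linarith))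
      filter_upwards [this] with s hs; exact hs
    have h6 : ∀ᶠ s in nhdsWithin t (Set.Ioi t), B s < B t + ε/2 :=
      h5.filter_mono nhdsWithin_le_nhds
    rcases (h6.and self_mem_nhdsWithin).exists with ⟨t', ht'1, ht'2⟩
    rcases exists_rat_btwn (show t < t' from ht'2) with ⟨q', hq'1, hq'2⟩
    have h7 : φ q' ≤ B t' := le_reg h1 hq'2
    have h8 := (hpt q') (Iio_mem_nhds (show φ q' < φ q' + ε/2 by linarith))
    filter_upwards [h8] with k hk
    simp only [Set.mem_preimage, Set.mem_Iio] at hk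
    have h9 : A (ψ k) t ≤ A (ψ k) (q':ℝ) := (hA (ψ k)).1 hq'1.le
    linarith
  rcases (hlow.and hup).exists_forall_of_atTop with ⟨N, hN⟩
  refine ⟨N, fun k hk => ?_⟩
  rcases hN k hk with ⟨hk1, hk2⟩
  rw [Real.dist_eq, abs_lt]
  constructor <;> linarith


section Lim

variable {star : (ℝ → ℝ) → (ℝ → ℝ) → (ℝ → ℝ)}

lemma star_H0_left (hT : IsTriangle star) {F : ℝ → ℝ} (hF : MemDP F) : star H0 F = F := by
  rw [hT.comm H0 F memDP_H0 hF, hT.ident F hF]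

/-- boundedness package -/
lemma bddA {A : ℕ → ℝ → ℝ} (hA : ∀ n, MemDP (A n)) (t : ℝ) :
    IsBoundedUnder (· ≤ ·) atTop (fun n => A n t) :=
  isBoundedUnder_of ⟨1, fun n => (hA n).2.2.1 t⟩

lemma bddA' {A : ℕ → ℝ → ℝ} (hA : ∀ n, MemDP (A n)) (t : ℝ) :
    IsBoundedUnder (· ≥ ·) atTop (fun n => A n t) :=
  isBoundedUnder_of ⟨0, fun n => (hA n).2.1 t⟩

/-- The fundamental "Cauchy implies weakly convergent" lemma. -/
lemma LIM (hT : IsTriangle star) (hc : StarCont star)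
    {A : ℕ → ℝ → ℝ} {C : ℕ → ℕ → ℝ → ℝ}
    (hA : ∀ n, MemDP (A n)) (hC : ∀ n m, MemDP (C n m))
    (hCH0 : ∀ t > (0:ℝ), ∀ ε > (0:ℝ), ∃ N, ∀ n ≥ N, ∀ m ≥ N, 1 - ε ≤ C n m t)
    (hLip : ∀ n m, dpLE (star (C n m) (A m)) (A n)) :
    ∃ L, MemDP L ∧ WConv A L := by
  -- Step 1 : interchange inequality
  have inter : ∀ s t : ℝ, s < t →
      limsup (fun n => A n s) atTop ≤ liminf (fun n => A n t) atTop := by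
    intro s t hst
    by_contra hcon
    push_neg at hcon
    set I := liminf (fun n => A n t) atTop with hI
    set J := limsup (fun n => A n s) atTop with hJ
    set δ := (J - I)/3 with hδ
    have hδpos : 0 < δ := by rw [hδ]; linarith
    have hfreq1 : ∃ᶠ n in atTop, A n t < I + δ :=
      frequently_lt_of_liminf_lt ((bddA hA t).isCoboundedUnder_ge) (by linarith)
    have hfreq2 : ∃ᶠ n in atTop, J - δ < A n s :=
      frequently_lt_of_lt_limsup ((bddA' hA s).isCoboundedUnder_le) (by linarith)
    have hn : ∀ k : ℕ, ∃ n ≥ k, A n t < I + δ := fun k => (frequently_atTop.1 hfreq1) k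
    have hm : ∀ k : ℕ, ∃ m ≥ k, J - δ < A m s := fun k => (frequently_atTop.1 hfreq2) k
    choose n hnge hnlt using hn
    choose m hmge hmgt using hm
    obtain ⟨ψ, hψ, B, hB, hBconv⟩ := helly (fun k => hA (m k))
    -- pick continuity points s' < s'' in (s,t)
    have hScnt : Set.Countable {x | ¬ContinuousAt B x} := hB.1.countable_not_continuousAt
    obtain ⟨s', hs'1, hs'2, hs'3⟩ := pick_avoid hScnt hst
    obtain ⟨s'', hs''1, hs''2, hs''3⟩ := pick_avoid hScnt hs'2
    have hcs' : ContinuousAt B s' := not_not.1 hs'3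
    have hcs'' : ContinuousAt B s'' := not_not.1 hs''3
    -- lower bound on B s'
    have hBs' : J - δ ≤ B s' := by
      refine ge_of_tendsto (hBconv s' hcs') (Eventually.of_forall (fun j => ?_))
      calc J - δ ≤ A (m (ψ j)) s := (hmgt (ψ j)).le
      _ ≤ A (m (ψ j)) s' := (hA _).1 hs'1.le
    -- C (n (ψ j)) (m (ψ j)) → H0
    have hCconv : WConv (fun j => C (n (ψ j)) (m (ψ j))) H0 := by
      refine wconv_H0 (fun j => hC _ _) (fun t' ht' ε hε => ?_)
      rcases hCH0 t' ht' ε hε with ⟨N, hN⟩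
      refine ⟨N, fun j hj => ?_⟩
      exact hN _ (le_trans hj (le_trans (hψ.le_apply) (hnge _))) _
        (le_trans hj (le_trans (hψ.le_apply) (hmge _)))
    have hstar := hc _ _ _ _ (fun j => hC _ _) (fun j => hA _)  memDP_H0 hB hCconv
      (fun t' hct' => hBconv t' hct')
    rw [star_H0_left hT hB] at hstar
    have hBs'' : B s'' ≤ I + δ := by
      refine le_of_tendsto (hstar s'' hcs'') (Eventually.of_forall (fun j => ?_))
      calc star (C (n (ψ j)) (m (ψ j))) (A (m (ψ j))) s'' ≤ A (n (ψ j)) s'' := hLip _ _ _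
      _ ≤ A (n (ψ j)) t := (hA _).1 hs''2.le
      _ ≤ I + δ := (hnlt (ψ j)).le
    have : J - δ ≤ I + δ := le_trans hBs' (le_trans (hB.1 hs''1.le) hBs'')
    rw [hδ] at this
    linarith
  -- Step 2 : define the limit
  set φ : ℚ → ℝ := fun q => liminf (fun n => A n (q:ℝ)) atTop with hφ
  have hφmono : ∀ q q' : ℚ, q ≤ q' → φ q ≤ φ q' := by
    intro q q' hqq
    exact liminf_le_liminf (Eventually.of_forall (fun n => (hA n).1 (by exact_mod_cast hqq)))
      (bddA' hA _) ((bddA hA _).isCoboundedUnder_ge)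
  have hφ0 : ∀ q, 0 ≤ φ q := fun q =>
    le_liminf_of_le ((bddA hA _).isCoboundedUnder_ge)
      (Eventually.of_forall (fun n => (hA n).2.1 _))
  have hφ1 : ∀ q, φ q ≤ 1 := fun q =>
    liminf_le_of_frequently_le (Eventually.of_forall (fun n => (hA n).2.2.1 _)).frequently
      (bddA' hA _)
  have hφneg : ∀ q : ℚ, (q:ℝ) ≤ 0 → φ q = 0 := by
    intro q hq
    have : (fun n => A n (q:ℝ)) = fun _ => (0:ℝ) := by
      funext n; exact (hA n).2.2.2.2 _ hq
    rw [hφ]; simp only [this, liminf_const]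
  refine ⟨reg φ, reg_memDP hφmono hφ0 hφ1 hφneg, ?_⟩
  -- Step 3 : weak convergence
  intro t hct
  set L := reg φ with hL
  rw [Metric.tendsto_atTop]
  intro ε hε
  have h2 : L t - ε/2 < L t := by linarith
  rcases exists_lt_of_lt_csSup (reg_nonempty φ t) h2 with ⟨v, hv, hvgt⟩
  rcases hv with ⟨q0, hq0, rfl⟩
  have hlow : ∀ᶠ n in atTop, L t - ε < A n t := by
    have h3 : L t - ε < liminf (fun n => A n (q0:ℝ)) atTop := by
      change L t - ε < φ q0; linarith
    filter_upwards [eventually_lt_of_lt_liminf h3 (bddA' hA _)] with n hn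
    exact lt_of_lt_of_le hn ((hA n).1 hq0.le)
  have hup : ∀ᶠ n in atTop, A n t < L t + ε := by
    have h5 : ∀ᶠ s in nhds t, L s < L t + ε/2 := by
      have := hct (Iio_mem_nhds (show L t < L t + ε/2 by linarith))
      filter_upwards [this] with s hs; exact hs
    have h6 : ∀ᶠ s in nhdsWithin t (Set.Ioi t), L s < L t + ε/2 :=
      h5.filter_mono nhdsWithin_le_nhds
    rcases (h6.and self_mem_nhdsWithin).exists with ⟨t', ht'1, ht'2⟩
    rcases exists_rat_btwn (show t < t' from ht'2) with ⟨q', hq'1, hq'2⟩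
    have h7 : φ q' ≤ L t' := le_reg hφ1 hq'2
    have h8 : limsup (fun n => A n t) atTop < L t + ε :=
      lt_of_le_of_lt (inter t (q':ℝ) hq'1) (by change φ q' ≤ L t' at h7; linarith)
    exact eventually_lt_of_limsup_lt h8 (bddA hA _)
  rcases (hlow.and hup).exists_forall_of_atTop with ⟨N, hN⟩
  refine ⟨N, fun k hk => ?_⟩
  rcases hN k hk with ⟨hk1, hk2⟩
  rw [Real.dist_eq, abs_lt]
  constructor <;> linarith

end Lim


section Group

variable {G : Type} [Group G] {D : G → G → ℝ → ℝ} {star : (ℝ → ℝ) → (ℝ → ℝ) → (ℝ → ℝ)}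

lemma D_one (h : IsPIMG D star) (x y : G) : D (x * y⁻¹) 1 = D x y := by
  have := h.invR (x * y⁻¹) 1 y
  simpa using this.symm

lemma D_inv_inv (h : IsPIMG D star) (x y : G) : D x⁻¹ y⁻¹ = D x y := by
  have h1 := h.invL x⁻¹ y⁻¹ x
  simp only [mul_inv_cancel] at h1
  rw [← h1, h.symm 1 (x * y⁻¹), D_one h x y]

lemma D_inv_one (h : IsPIMG D star) (x : G) : D x⁻¹ 1 = D x 1 := by
  have := D_inv_inv h x 1
  simpa using this

/-- each term of a sup-convolution is dominated by the sup; specialized when the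
sup-convolution equals `dlt D 1`. -/
lemma term_le (h : IsPIMG D star) {f g : G → ℝ → ℝ}
    (hf : Lip1 D star f) (hg : Lip1 D star g)
    (hfg : sconv star f g = dlt D 1) (x y : G) :
    dpLE (star (f (x * y⁻¹)) (g y)) (D x 1) := by
  intro t
  have h1 : star (f (x * y⁻¹)) (g y) t ≤ ⨆ z : G, star (f (x * z⁻¹)) (g z) t := by
    refine le_ciSup (f := fun z : G => star (f (x * z⁻¹)) (g z) t) ⟨1, ?_⟩ y
    rintro v ⟨z, rfl⟩
    exact ((h.tri.mem _ _ (hf.1 _) (hg.1 _))).2.2.1 t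
  have h2 : (⨆ z : G, star (f (x * z⁻¹)) (g z) t) = D x 1 t := by
    have := congrFun (congrFun hfg x) t
    exact this
  rw [h2] at h1
  exact h1

lemma lip1_dlt (h : IsPIMG D star) (a : G) : Lip1 D star (dlt D a) :=
  ⟨fun y => h.mem y a, fun x y => h.triangle_ineq x y a⟩

lemma inPi_dlt (h : IsPIMG D star) (a : G) : InPi D star (dlt D a) := by
  refine ⟨lip1_dlt h a, fun _ => a, ?_, ?_⟩
  · intro t ht ε hε
    refine ⟨0, fun n _ p _ => ?_⟩
    rw [(h.eq_iff a a).2 rfl, H0_pos ht]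
    linarith
  · intro x t _
    have h1 : (fun _ : ℕ => D a x t) = fun _ : ℕ => dlt D a x t := by
      funext n; rw [dlt, h.symm a x]
    exact h1 ▸ tendsto_const_nhds

lemma unitDP_H0 (hT : IsTriangle star) : UnitDP star H0 :=
  ⟨memDP_H0, H0, memDP_H0, hT.ident H0 memDP_H0, hT.ident H0 memDP_H0⟩

lemma star_le_self (hT : IsTriangle star) {F K : ℝ → ℝ} (hF : MemDP F) (hK : MemDP K) :
    dpLE (star F K) F := by
  intro t
  have h1 : dpLE (star K F) (star H0 F) := hT.mono K H0 F hK memDP_H0 hF hK.le_H0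
  have h2 := h1 t
  rwa [hT.comm K F hK hF, star_H0_left hT hF] at h2

/-- (A ⋆ U) ⋆ (B ⋆ V) = (A ⋆ B) ⋆ (U ⋆ V) -/
lemma star_swap (hT : IsTriangle star) {A U B V : ℝ → ℝ}
    (hA : MemDP A) (hU : MemDP U) (hB : MemDP B) (hV : MemDP V) :
    star (star A U) (star B V) = star (star A B) (star U V) := by
  have mBV := hT.mem B V hB hV
  have mUB := hT.mem U B hU hB
  have mBU := hT.mem B U hB hU
  have mUV := hT.mem U V hU hV
  rw [← hT.assoc A U (star B V) hA hU mBV,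
      hT.assoc U B V hU hB hV,
      hT.comm U B hU hB,
      ← hT.assoc B U V hB hU hV,
      hT.assoc A B (star U V) hA hB mUV]

end Group

section Fwd

variable {G : Type} [Group G] {D : G → G → ℝ → ℝ} {star : (ℝ → ℝ) → (ℝ → ℝ) → (ℝ → ℝ)}

lemma contAt_H0_pos {t : ℝ} (ht : 0 < t) : ContinuousAt H0 t := by
  have h1 : H0 =ᶠ[nhds t] fun _ => (1:ℝ) := by
    filter_upwards [Ioi_mem_nhds ht] with s hs
    exact H0_pos hs
  exact (continuousAt_const).congr h1.symm

lemma star_swap' (hT : IsTriangle star) {A U B V : ℝ → ℝ}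
    (hA : MemDP A) (hU : MemDP U) (hB : MemDP B) (hV : MemDP V) :
    star (star A U) (star B V) = star (star A V) (star B U) := by
  rw [star_swap hT hA hU hB hV, hT.comm U V hU hV, ← star_swap hT hA hV hB hU]

lemma units_decomp (h : IsPIMG D star) (hc : StarCont star)
    {f g : G → ℝ → ℝ} (hf : Lip1 D star f) (hg : Lip1 D star g)
    (hfg : sconv star f g = dlt D 1) (hgf : sconv star g f = dlt D 1) :
    ∃ l U, InPi D star l ∧ UnitDP star U ∧ f = fun x => star (l x) U := by
  have hT := h.tri
  -- step 1 : choose the sequence b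
  have hex : ∀ n : ℕ, ∃ w : G,
      1 - 1/((n:ℝ)+1) < star (f w) (g w⁻¹) (1/((n:ℝ)+1)) := by
    intro n
    have hpos : (0:ℝ) < 1/((n:ℝ)+1) := by positivity
    have hsup : (⨆ y : G, star (f (1 * y⁻¹)) (g y) (1/((n:ℝ)+1))) = 1 := by
      have h1 := congrFun (congrFun hfg 1) (1/((n:ℝ)+1))
      rw [sconv] at h1
      rw [h1, dlt, (h.eq_iff 1 1).2 rfl, H0_pos hpos]
    have h2 : 1 - 1/((n:ℝ)+1) < ⨆ y : G, star (f (1 * y⁻¹)) (g y) (1/((n:ℝ)+1)) := by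
      rw [hsup]; linarith
    obtain ⟨y, hy⟩ := exists_lt_of_lt_ciSup h2
    refine ⟨y⁻¹, ?_⟩
    simpa using hy
  choose b hb using hex
  set diag : ℕ → ℝ → ℝ := fun n => star (f (b n)) (g ((b n)⁻¹)) with hdiag
  have hdmem : ∀ n, MemDP (diag n) := fun n => hT.mem _ _ (hf.1 _) (hg.1 _)
  have hdiagPt : ∀ t > (0:ℝ), ∀ ε > (0:ℝ), ∃ N, ∀ n ≥ N, 1 - ε ≤ diag n t := by
    intro t ht ε hε
    obtain ⟨N, hN⟩ := exists_nat_one_div_lt (lt_min ht hε)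
    refine ⟨N, fun n hn => ?_⟩
    have hmono : (1:ℝ)/((n:ℝ)+1) ≤ 1/((N:ℝ)+1) := by
      apply one_div_le_one_div_of_le (by positivity)
      have : (N:ℝ) ≤ (n:ℝ) := by exact_mod_cast hn
      linarith
    have h1 : (1:ℝ)/((n:ℝ)+1) ≤ t := le_of_lt (lt_of_le_of_lt hmono (lt_of_lt_of_le hN (min_le_left _ _)))
    have h2 : (1:ℝ)/((n:ℝ)+1) ≤ ε := le_of_lt (lt_of_le_of_lt hmono (lt_of_lt_of_le hN (min_le_right _ _)))
    calc 1 - ε ≤ 1 - 1/((n:ℝ)+1) := by linarith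
    _ ≤ diag n (1/((n:ℝ)+1)) := (hb n).le
    _ ≤ diag n t := (hdmem n).1 h1
  have hdiagH0 : WConv diag H0 := wconv_H0 hdmem hdiagPt
  -- step 2 : cross bounds and Cauchy property
  have hcross : ∀ n m, dpLE (star (f (b n)) (g ((b m)⁻¹))) (D (b n) (b m)) := by
    intro n m
    have h1 := term_le h hf hg hfg (b n * (b m)⁻¹) ((b m)⁻¹)
    simp only [inv_inv, inv_mul_cancel_right, mul_inv_cancel_right] at h1
    rwa [D_one h (b n) (b m)] at h1
  have hlow : ∀ n m, dpLE (star (diag n) (diag m)) (D (b n) (b m)) := by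
    intro n m t
    have h1 : star (diag n) (diag m) =
        star (star (f (b n)) (g ((b m)⁻¹))) (star (f (b m)) (g ((b n)⁻¹))) :=
      star_swap' hT (hf.1 _) (hg.1 _) (hf.1 _) (hg.1 _)
    rw [h1]
    calc star (star (f (b n)) (g ((b m)⁻¹))) (star (f (b m)) (g ((b n)⁻¹))) t
        ≤ star (f (b n)) (g ((b m)⁻¹)) t :=
          star_le_self hT (hT.mem _ _ (hf.1 _) (hg.1 _)) (hT.mem _ _ (hf.1 _) (hg.1 _)) t
    _ ≤ D (b n) (b m) t := hcross n m t
  have hCauchy : PCauchy D b := by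
    intro t ht ε hε
    by_contra hcon
    push_neg at hcon
    choose n hn p hp hlt using hcon
    have hFn : WConv (fun k => diag (n k)) H0 := by
      refine wconv_H0 (fun k => hdmem _) (fun t' ht' ε' hε' => ?_)
      obtain ⟨N, hN⟩ := hdiagPt t' ht' ε' hε'
      exact ⟨N, fun k hk => hN _ (le_trans hk (hn k))⟩
    have hLn : WConv (fun k => diag (p k)) H0 := by
      refine wconv_H0 (fun k => hdmem _) (fun t' ht' ε' hε' => ?_)
      obtain ⟨N, hN⟩ := hdiagPt t' ht' ε' hε'
      exact ⟨N, fun k hk => hN _ (le_trans hk (hp k))⟩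
    have hstar := hc _ _ _ _ (fun k => hdmem (n k)) (fun k => hdmem (p k)) memDP_H0 memDP_H0
      hFn hLn
    rw [hT.ident H0 memDP_H0] at hstar
    have h2 := hstar t (contAt_H0_pos ht)
    rw [H0_pos ht] at h2
    have h3 : ∀ᶠ k in atTop, 1 - ε < star (diag (n k)) (diag (p k)) t := by
      filter_upwards [h2 (Ioi_mem_nhds (show 1 - ε < 1 by linarith))] with k hk
      exact hk
    obtain ⟨k, hk⟩ := h3.exists
    have h4 : star (diag (n k)) (diag (p k)) t ≤ D (b (n k)) (b (p k)) t := hlow _ _ _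
    have h5 := hlt k
    linarith
  -- step 3 : limits
  have hC : ∀ n m, MemDP (D (b n) (b m)) := fun n m => h.mem _ _
  have hLex : ∀ x : G, ∃ L, MemDP L ∧ WConv (fun n => D (b n) x) L := by
    intro x
    exact LIM hT hc (fun n => h.mem _ _) hC hCauchy (fun n m => h.triangle_ineq (b n) (b m) x)
  choose l hlmem hlconv using hLex
  obtain ⟨U, hUmem, hUconv⟩ := LIM hT hc (fun n => hf.1 (b n)) hC hCauchy
    (fun n m => hf.2 (b n) (b m))
  have hCauchyInv : ∀ t > (0:ℝ), ∀ ε > (0:ℝ), ∃ N, ∀ n ≥ N, ∀ m ≥ N,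
      1 - ε ≤ D ((b n)⁻¹) ((b m)⁻¹) t := by
    intro t ht ε hε
    obtain ⟨N, hN⟩ := hCauchy t ht ε hε
    exact ⟨N, fun n hn m hm => by rw [D_inv_inv h]; exact hN n hn m hm⟩
  obtain ⟨V, hVmem, hVconv⟩ := LIM hT hc (fun n => hg.1 ((b n)⁻¹)) (fun n m => h.mem _ _)
    hCauchyInv (fun n m => hg.2 ((b n)⁻¹) ((b m)⁻¹))
  -- step 4 : InPi l
  have hlip : ∀ x y, dpLE (star (D x y) (l y)) (l x) := by
    intro x y
    refine wconv_le (hT.mem _ _ (h.mem x y) (hlmem y)) (hlmem x)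
      (hc (fun _ => D x y) (fun n => D (b n) y) (D x y) (l y) (fun _ => h.mem x y)
        (fun n => h.mem _ _) (h.mem x y) (hlmem y) (wconv_const _) (hlconv y))
      (hlconv x) (fun n t => ?_)
    have h1 : star (D x y) (D (b n) y) = star (D (b n) y) (D y x) := by
      rw [hT.comm _ _ (h.mem x y) (h.mem _ _), h.symm x y]
    rw [h1]
    exact h.triangle_ineq (b n) y x t
  have hInPi : InPi D star l := ⟨⟨hlmem, hlip⟩, b, hCauchy, hlconv⟩
  -- step 5 : U is a unit
  have hUV : star U V = H0 := by
    refine wconv_unique (hT.mem U V hUmem hVmem) memDP_H0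
      (hc _ _ _ _ (fun n => hf.1 _) (fun n => hg.1 _) hUmem hVmem hUconv hVconv) ?_
    exact hdiagH0
  have hVU : star V U = H0 := by rw [hT.comm V U hVmem hUmem]; exact hUV
  -- step 6 : f = l ⋆ U
  refine ⟨l, U, hInPi, ⟨hUmem, V, hVmem, hUV, hVU⟩, ?_⟩
  funext x
  have hfx : MemDP (f x) := hf.1 x
  have hlU : MemDP (star (l x) U) := hT.mem _ _ (hlmem x) hUmem
  have hge : dpLE (star (l x) U) (f x) := by
    refine wconv_le hlU hfx
      (hc _ _ _ _ (fun n => h.mem _ _) (fun n => hf.1 _) (hlmem x) hUmem (hlconv x) hUconv)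
      (wconv_const (f x)) (fun n t => ?_)
    have h1 : D (b n) x = D x (b n) := h.symm _ _
    rw [h1]
    exact hf.2 x (b n) t
  have hle : dpLE (f x) (star (l x) U) := by
    have hPn : WConv (fun n => star (f x) (diag n)) (f x) := by
      have h1 := hc (fun _ => f x) diag (f x) H0 (fun _ => hfx) hdmem hfx memDP_H0
        (wconv_const _) hdiagH0
      rwa [hT.ident (f x) hfx] at h1
    refine wconv_le hfx hlU hPn
      (hc _ _ _ _ (fun n => h.mem _ _) (fun n => hf.1 _) (hlmem x) hUmem (hlconv x) hUconv)
      (fun n t => ?_)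
    have hterm : dpLE (star (f x) (g ((b n)⁻¹))) (D (b n) x) := by
      have h1 := term_le h hf hg hfg (x * (b n)⁻¹) ((b n)⁻¹)
      simp only [inv_inv, inv_mul_cancel_right, mul_inv_cancel_right] at h1
      rwa [D_one h x (b n), h.symm x (b n)] at h1
    have h2 : star (f x) (diag n) = star (star (f x) (g ((b n)⁻¹))) (f (b n)) := by
      simp only [hdiag]
      rw [hT.comm (f (b n)) (g ((b n)⁻¹)) (hf.1 _) (hg.1 _),
          hT.assoc (f x) (g ((b n)⁻¹)) (f (b n)) hfx (hg.1 _) (hf.1 _)]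
    rw [h2]
    exact hT.mono _ _ _ (hT.mem _ _ hfx (hg.1 _)) (h.mem _ _) (hf.1 _) hterm t
  exact funext (fun t => le_antisymm (hle t) (hge t))

end Fwd

section Rev

variable {G : Type} [Group G] {D : G → G → ℝ → ℝ} {star : (ℝ → ℝ) → (ℝ → ℝ) → (ℝ → ℝ)}

lemma star_mono_right (hT : IsTriangle star) {F G1 G2 : ℝ → ℝ} (hF : MemDP F)
    (hG1 : MemDP G1) (hG2 : MemDP G2) (hle : dpLE G1 G2) : dpLE (star F G1) (star F G2) := by
  intro t
  rw [hT.comm F G1 hF hG1, hT.comm F G2 hF hG2]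
  exact hT.mono G1 G2 F hG1 hG2 hF hle t

lemma pi_inverse (h : IsPIMG D star) (hc : StarCont star) {l : G → ℝ → ℝ}
    (hl : InPi D star l) :
    InPi D star (fun x => l x⁻¹) ∧ sconv star l (fun x => l x⁻¹) = dlt D 1 ∧
      sconv star (fun x => l x⁻¹) l = dlt D 1 := by
  have hT := h.tri
  obtain ⟨⟨hlmem, hlip⟩, a, hca, hconv⟩ := hl
  have h_lan : ∀ t > (0:ℝ), ∀ ε > (0:ℝ), ∃ N, ∀ n ≥ N, 1 - ε ≤ l (a n) t := by
    intro t ht ε hε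
    obtain ⟨N, hN⟩ := hca (t/2) (half_pos ht) ε hε
    refine ⟨N, fun n hn => ?_⟩
    obtain ⟨s, hs1, hs2, hs3⟩ :=
      pick_avoid ((hlmem (a n)).1.countable_not_continuousAt) (show t/2 < t by linarith)
    have h1 : 1 - ε ≤ l (a n) s := by
      refine ge_of_tendsto (hconv (a n) s (not_not.1 hs3)) ?_
      filter_upwards [eventually_ge_atTop N] with m hm
      calc 1 - ε ≤ D (a m) (a n) (t/2) := hN m hm n hn
      _ ≤ D (a m) (a n) s := (h.mem _ _).1 hs1.le
    exact le_trans h1 ((hlmem (a n)).1 hs2.le)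
  have hlanH0 : WConv (fun n => l (a n)) H0 := wconv_H0 (fun n => hlmem _) h_lan
  have hDx1mem : ∀ x : G, MemDP (D x 1) := fun x => h.mem x 1
  have hInner : ∀ x : G, WConv (fun n => star (D x 1) (l (a n))) (D x 1) := by
    intro x
    have h1 := hc (fun _ => D x 1) (fun n => l (a n)) (D x 1) H0 (fun _ => hDx1mem x)
      (fun n => hlmem _) (hDx1mem x) memDP_H0 (wconv_const _) hlanH0
    rwa [hT.ident _ (hDx1mem x)] at h1
  refine ⟨?_, ?_, ?_⟩
  · -- InPi of the inverse
    refine ⟨⟨fun x => hlmem x⁻¹, fun x y => ?_⟩, fun n => (a n)⁻¹, ?_, ?_⟩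
    · have h1 : D x y = D x⁻¹ y⁻¹ := (D_inv_inv h x y).symm
      rw [h1]
      exact hlip x⁻¹ y⁻¹
    · intro t ht ε hε
      obtain ⟨N, hN⟩ := hca t ht ε hε
      exact ⟨N, fun n hn p hp => by rw [D_inv_inv h]; exact hN n hn p hp⟩
    · intro x
      have h1 : (fun n => D ((a n)⁻¹) x) = fun n => D (a n) x⁻¹ := by
        funext n
        have := D_inv_inv h (a n) x⁻¹
        rwa [inv_inv] at this
      rw [h1]
      exact hconv x⁻¹
  · -- l ⊙ li = δₑ
    funext x
    have hbdd : ∀ t : ℝ, BddAbove (Set.range (fun y : G => star (l (x * y⁻¹)) (l y⁻¹) t)) := by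
      intro t
      refine ⟨1, ?_⟩
      rintro v ⟨y, rfl⟩
      exact (hT.mem _ _ (hlmem _) (hlmem _)).2.2.1 t
    have hterm : ∀ y : G, dpLE (star (l (x * y⁻¹)) (l y⁻¹)) (D x 1) := by
      intro y
      refine wconv_le (hT.mem _ _ (hlmem _) (hlmem _)) (hDx1mem x)
        (hc (fun n => D (a n) (x * y⁻¹)) (fun n => D (a n) y⁻¹) _ _
          (fun n => h.mem _ _) (fun n => h.mem _ _) (hlmem _) (hlmem _)
          (hconv _) (hconv _)) (wconv_const _) (fun n t => ?_)
      have e1 : D (a n) (x * y⁻¹) = D x (a n * y) := by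
        rw [h.symm (a n) (x * y⁻¹)]
        have := h.invR (x * y⁻¹) (a n) y
        simpa using this.symm
      have e2 : D (a n) y⁻¹ = D (a n * y) 1 := by
        have := h.invR (a n) y⁻¹ y
        simpa using this.symm
      show star (D (a n) (x * y⁻¹)) (D (a n) y⁻¹) t ≤ D x 1 t
      rw [e1, e2]
      exact h.triangle_ineq x (a n * y) 1 t
    have hSle : ∀ t, (⨆ y : G, star (l (x * y⁻¹)) (l y⁻¹) t) ≤ D x 1 t := fun t =>
      Real.iSup_le (fun y => hterm y t) ((hDx1mem x).2.1 t)
    have h0S : ∀ t, (0:ℝ) ≤ ⨆ y : G, star (l (x * y⁻¹)) (l y⁻¹) t := fun t =>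
      le_trans ((hT.mem _ _ (hlmem _) (hlmem _)).2.1 t) (le_ciSup (hbdd t) 1)
    have hSmono : Monotone (fun t => ⨆ y : G, star (l (x * y⁻¹)) (l y⁻¹) t) := by
      intro t t' htt'
      exact Real.iSup_le (fun y => le_trans ((hT.mem _ _ (hlmem _) (hlmem _)).1 htt')
        (le_ciSup (hbdd t') y)) (h0S t')
    have hge : dpLE (D x 1) (fun t => ⨆ y : G, star (l (x * y⁻¹)) (l y⁻¹) t) := by
      refine dp_cmp (hDx1mem x) hSmono ((hDx1mem x).1.countable_not_continuousAt)
        (fun t ht => ?_)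
      have hSnconv : WConv (fun n => star (l (a n)) (star (D x 1) (l (a n)))) (D x 1) := by
        have h1 := hc (fun n => l (a n)) (fun n => star (D x 1) (l (a n))) H0 (D x 1)
          (fun n => hlmem _) (fun n => hT.mem _ _ (hDx1mem x) (hlmem _)) memDP_H0
          (hDx1mem x) hlanH0 (hInner x)
        rwa [star_H0_left hT (hDx1mem x)] at h1
      refine le_of_tendsto (hSnconv t (not_not.1 ht)) (Eventually.of_forall (fun n => ?_))
      have hstep : dpLE (star (D x 1) (l (a n))) (l (x⁻¹ * a n)) := by
        have h2 := hlip (x⁻¹ * a n) (a n)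
        have e : D (x⁻¹ * a n) (a n) = D x 1 := by
          have h3 := h.invR x⁻¹ 1 (a n)
          simp only [one_mul] at h3
          rw [h3, D_inv_one h]
        rwa [e] at h2
      have h3 : dpLE (star (l (a n)) (star (D x 1) (l (a n)))) (star (l (a n)) (l (x⁻¹ * a n))) :=
        star_mono_right hT (hlmem _) (hT.mem _ _ (hDx1mem x) (hlmem _)) (hlmem _) hstep
      refine le_trans (h3 t) ?_
      have h4 := le_ciSup (hbdd t) ((a n)⁻¹ * x)
      simp only [mul_inv_rev, inv_inv, mul_inv_cancel_left] at h4
      exact h4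
    funext t
    show (⨆ y : G, star (l (x * y⁻¹)) (l y⁻¹) t) = D x 1 t
    exact le_antisymm (hSle t) (hge t)
  · -- li ⊙ l = δₑ
    funext x
    have hbdd : ∀ t : ℝ, BddAbove (Set.range (fun y : G => star (l ((x * y⁻¹)⁻¹)) (l y) t)) := by
      intro t
      refine ⟨1, ?_⟩
      rintro v ⟨y, rfl⟩
      exact (hT.mem _ _ (hlmem _) (hlmem _)).2.2.1 t
    have hterm : ∀ y : G, dpLE (star (l ((x * y⁻¹)⁻¹)) (l y)) (D x 1) := by
      intro y
      refine wconv_le (hT.mem _ _ (hlmem _) (hlmem _)) (hDx1mem x)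
        (hc (fun n => D (a n) ((x * y⁻¹)⁻¹)) (fun n => D (a n) y) _ _
          (fun n => h.mem _ _) (fun n => h.mem _ _) (hlmem _) (hlmem _)
          (hconv _) (hconv _)) (wconv_const _) (fun n t => ?_)
      have e1 : D (a n) ((x * y⁻¹)⁻¹) = D y (a n * x) := by
        rw [mul_inv_rev, inv_inv, h.symm (a n) (y * x⁻¹)]
        have := h.invR (y * x⁻¹) (a n) x
        simpa using this.symm
      have e3 : D (a n) (a n * x) = D x 1 := by
        have h3 := h.invL 1 x (a n)
        simp only [mul_one] at h3
        rw [h3, h.symm 1 x]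
      show star (D (a n) ((x * y⁻¹)⁻¹)) (D (a n) y) t ≤ D x 1 t
      rw [e1, hT.comm _ _ (h.mem _ _) (h.mem _ _)]
      calc star (D (a n) y) (D y (a n * x)) t ≤ D (a n) (a n * x) t :=
        h.triangle_ineq (a n) y (a n * x) t
      _ = D x 1 t := by rw [e3]
    have hSle : ∀ t, (⨆ y : G, star (l ((x * y⁻¹)⁻¹)) (l y) t) ≤ D x 1 t := fun t =>
      Real.iSup_le (fun y => hterm y t) ((hDx1mem x).2.1 t)
    have h0S : ∀ t, (0:ℝ) ≤ ⨆ y : G, star (l ((x * y⁻¹)⁻¹)) (l y) t := fun t =>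
      le_trans ((hT.mem _ _ (hlmem _) (hlmem _)).2.1 t) (le_ciSup (hbdd t) 1)
    have hSmono : Monotone (fun t => ⨆ y : G, star (l ((x * y⁻¹)⁻¹)) (l y) t) := by
      intro t t' htt'
      exact Real.iSup_le (fun y => le_trans ((hT.mem _ _ (hlmem _) (hlmem _)).1 htt')
        (le_ciSup (hbdd t') y)) (h0S t')
    have hge : dpLE (D x 1) (fun t => ⨆ y : G, star (l ((x * y⁻¹)⁻¹)) (l y) t) := by
      refine dp_cmp (hDx1mem x) hSmono ((hDx1mem x).1.countable_not_continuousAt)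
        (fun t ht => ?_)
      have hSnconv : WConv (fun n => star (star (D x 1) (l (a n))) (l (a n))) (D x 1) := by
        have h1 := hc (fun n => star (D x 1) (l (a n))) (fun n => l (a n)) (D x 1) H0
          (fun n => hT.mem _ _ (hDx1mem x) (hlmem _)) (fun n => hlmem _) (hDx1mem x)
          memDP_H0 (hInner x) hlanH0
        rwa [hT.ident _ (hDx1mem x)] at h1
      refine le_of_tendsto (hSnconv t (not_not.1 ht)) (Eventually.of_forall (fun n => ?_))
      have hstep : dpLE (star (D x 1) (l (a n))) (l (a n * x⁻¹)) := by
        have h2 := hlip (a n * x⁻¹) (a n)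
        have e : D (a n * x⁻¹) (a n) = D x 1 := by
          have h3 := h.invL x⁻¹ 1 (a n)
          simp only [mul_one] at h3
          rw [h3, D_inv_one h]
        rwa [e] at h2
      have h3 : dpLE (star (star (D x 1) (l (a n))) (l (a n)))
          (star (l (a n * x⁻¹)) (l (a n))) :=
        hT.mono _ _ _ (hT.mem _ _ (hDx1mem x) (hlmem _)) (hlmem _) (hlmem _) hstep
      refine le_trans (h3 t) ?_
      have h4 := le_ciSup (hbdd t) (a n)
      have e4 : (x * (a n)⁻¹)⁻¹ = a n * x⁻¹ := by group
      rw [e4] at h4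
      exact h4
    funext t
    show (⨆ y : G, star (l ((x * y⁻¹)⁻¹)) (l y) t) = D x 1 t
    exact le_antisymm (hSle t) (hge t)

end Rev

section Main

variable {G : Type} [Group G] {D : G → G → ℝ → ℝ} {star : (ℝ → ℝ) → (ℝ → ℝ) → (ℝ → ℝ)}

lemma sconv_units (h : IsPIMG D star) {l li : G → ℝ → ℝ} {U V : ℝ → ℝ}
    (hl : ∀ x, MemDP (l x)) (hli : ∀ x, MemDP (li x)) (hU : MemDP U) (hV : MemDP V)
    (hUV : star U V = H0) (hlli : sconv star l li = dlt D 1) :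
    sconv star (fun x => star (l x) U) (fun x => star (li x) V) = dlt D 1 := by
  have hT := h.tri
  funext x t
  show (⨆ y : G, star (star (l (x * y⁻¹)) U) (star (li y) V) t) = dlt D 1 x t
  have h1 : (fun y : G => star (star (l (x * y⁻¹)) U) (star (li y) V) t)
      = fun y : G => star (l (x * y⁻¹)) (li y) t := by
    funext y
    rw [star_swap hT (hl _) hU (hli _) hV, hUV, hT.ident _ (hT.mem _ _ (hl _) (hli _))]
  rw [show (⨆ y : G, star (star (l (x * y⁻¹)) U) (star (li y) V) t)
      = ⨆ y : G, star (l (x * y⁻¹)) (li y) t from by rw [h1]]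
  exact congrFun (congrFun hlli x) t

lemma lip1_star_unit (h : IsPIMG D star) {li : G → ℝ → ℝ} {V : ℝ → ℝ}
    (hli : Lip1 D star li) (hV : MemDP V) : Lip1 D star (fun x => star (li x) V) := by
  have hT := h.tri
  refine ⟨fun x => hT.mem _ _ (hli.1 x) hV, fun x y t => ?_⟩
  show star (D x y) (star (li y) V) t ≤ star (li x) V t
  rw [hT.assoc _ _ _ (h.mem x y) (hli.1 y) hV]
  exact hT.mono _ _ _ (hT.mem _ _ (h.mem _ _) (hli.1 _)) (hli.1 _) hV (hli.2 x y) t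

lemma unit_rev (h : IsPIMG D star) (hc : StarCont star) {f l : G → ℝ → ℝ} {U : ℝ → ℝ}
    (hl : InPi D star l) (hU : UnitDP star U) (hfeq : f = fun x => star (l x) U) :
    ∃ g, Lip1 D star g ∧ sconv star f g = dlt D 1 ∧ sconv star g f = dlt D 1 := by
  obtain ⟨hUmem, V, hVmem, hUV, hVU⟩ := hU
  obtain ⟨hliPi, hlli, hlil⟩ := pi_inverse h hc hl
  refine ⟨fun x => star (l x⁻¹) V, lip1_star_unit h hliPi.1 hVmem, ?_, ?_⟩
  · rw [hfeq]
    exact sconv_units h (fun x => hl.1.1 x) (fun x => hliPi.1.1 x) hUmem hVmem hUV hlli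
  · rw [hfeq]
    exact sconv_units h (fun x => hliPi.1.1 x) (fun x => hl.1.1 x) hVmem hUmem hVU hlil

lemma complete_case (h : IsPIMG D star) (hc : StarCont star) {f : G → ℝ → ℝ}
    (hPi : InPi D star f)
    (hcomp : ∀ a : ℕ → G, PCauchy D a → ∃ z : G, WConv (fun n => D (a n) z) H0) :
    ∃ z : G, f = dlt D z := by
  have hT := h.tri
  obtain ⟨⟨hfmem, hflip⟩, a, hca, hconv⟩ := hPi
  obtain ⟨z, hz⟩ := hcomp a hca
  refine ⟨z, funext fun x => ?_⟩
  have hle : dpLE (f x) (D x z) := by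
    refine wconv_le (Pn := fun n => star (D (a n) x) (D (a n) z)) (hfmem x) (h.mem x z) ?_ (wconv_const _) (fun n t => ?_)
    · have h1 := hc (fun n => D (a n) x) (fun n => D (a n) z) (f x) H0 (fun n => h.mem _ _)
        (fun n => h.mem _ _) (hfmem x) memDP_H0 (hconv x) hz
      rwa [hT.ident _ (hfmem x)] at h1
    · show star (D (a n) x) (D (a n) z) t ≤ D x z t
      rw [h.symm (a n) x]
      exact h.triangle_ineq x (a n) z t
  have hge : dpLE (D x z) (f x) := by
    refine wconv_le (Pn := fun n => star (D x z) (D (a n) z)) (h.mem x z) (hfmem x) ?_ (hconv x) (fun n t => ?_)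
    · have h1 := hc (fun _ => D x z) (fun n => D (a n) z) (D x z) H0 (fun _ => h.mem _ _)
        (fun n => h.mem _ _) (h.mem x z) memDP_H0 (wconv_const _) hz
      rwa [hT.ident _ (h.mem x z)] at h1
    · show star (D x z) (D (a n) z) t ≤ D (a n) x t
      rw [h.symm (a n) z, h.symm (a n) x]
      exact h.triangle_ineq x z (a n) t
  exact funext fun t => le_antisymm (hle t) (hge t)

end Main


/-- the group of units of (Lip¹_⋆(G,Δ⁺), ⊙) is ⟨Π(G), 𝒰(Δ⁺)⟩;
inverses are ⟨f⁻¹,U⁻¹⟩; if 𝒰(Δ⁺) = {H₀} the units are exactly Π(G), and if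
moreover G is complete they are exactly {δ_a : a ∈ G}. -/
theorem stmt16 {G : Type} [Group G] (D : G → G → ℝ → ℝ)
    (star : (ℝ → ℝ) → (ℝ → ℝ) → (ℝ → ℝ)) (h : IsPIMG D star)
    (hc : StarCont star) (hsc : SupCont star) :
    (∀ f, Lip1 D star f →
      ((∃ g, Lip1 D star g ∧ sconv star f g = dlt D 1 ∧
          sconv star g f = dlt D 1) ↔
        ∃ l U, InPi D star l ∧ UnitDP star U ∧ f = fun x => star (l x) U)) ∧
    (∀ l li U V, InPi D star l → InPi D star li → MemDP U → MemDP V →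
      sconv star l li = dlt D 1 → sconv star li l = dlt D 1 →
      star U V = H0 → star V U = H0 →
      sconv star (fun x => star (l x) U) (fun x => star (li x) V) = dlt D 1 ∧
      sconv star (fun x => star (li x) V) (fun x => star (l x) U) = dlt D 1) ∧
    ((∀ U, UnitDP star U → U = H0) →
      ∀ f, Lip1 D star f →
        ((∃ g, Lip1 D star g ∧ sconv star f g = dlt D 1 ∧
            sconv star g f = dlt D 1) ↔ InPi D star f)) ∧
    ((∀ U, UnitDP star U → U = H0) →
      (∀ a : ℕ → G, PCauchy D a → ∃ z : G, WConv (fun n => D (a n) z) H0) →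
      ∀ f, Lip1 D star f →
        ((∃ g, Lip1 D star g ∧ sconv star f g = dlt D 1 ∧
            sconv star g f = dlt D 1) ↔ ∃ a : G, f = dlt D a)) := by
  have hT := h.tri
  refine ⟨?_, ?_, ?_, ?_⟩
  · intro f hf
    constructor
    · rintro ⟨g, hg, hfg, hgf⟩
      exact units_decomp h hc hf hg hfg hgf
    · rintro ⟨l, U, hl, hU, hfeq⟩
      exact unit_rev h hc hl hU hfeq
  · intro l li U V hl hli hU hV hlli hlil hUV hVU
    exact ⟨sconv_units h (fun x => hl.1.1 x) (fun x => hli.1.1 x) hU hV hUV hlli,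
      sconv_units h (fun x => hli.1.1 x) (fun x => hl.1.1 x) hV hU hVU hlil⟩
  · intro honly f hf
    constructor
    · rintro ⟨g, hg, hfg, hgf⟩
      obtain ⟨l, U, hl, hU, hfeq⟩ := units_decomp h hc hf hg hfg hgf
      have hU0 : U = H0 := honly U hU
      have hfl : f = l := by
        rw [hfeq, hU0]; funext x; exact hT.ident _ (hl.1.1 x)
      rw [hfl]; exact hl
    · intro hPi
      exact unit_rev h hc hPi (unitDP_H0 hT) (funext fun x => (hT.ident _ (hPi.1.1 x)).symm)
  · intro honly hcomp f hf
    constructor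
    · rintro ⟨g, hg, hfg, hgf⟩
      obtain ⟨l, U, hl, hU, hfeq⟩ := units_decomp h hc hf hg hfg hgf
      have hU0 : U = H0 := honly U hU
      have hfl : f = l := by
        rw [hfeq, hU0]; funext x; exact hT.ident _ (hl.1.1 x)
      exact complete_case h hc (by rw [hfl]; exact hl) hcomp
    · rintro ⟨a0, rfl⟩
      exact unit_rev h hc (inPi_dlt h a0) (unitDP_H0 hT)
        (funext fun x => (hT.ident _ (h.mem x a0)).symm)
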